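/- With notation as above, δ(I) = I if and only if −𝐝 ∈ S and Exp I ∩ V_mon(f) = Exp I \ (Exp I − 𝐝), where V_mon(f) = {𝐚 ∈ ℤ^d : f(𝐚) = 0}. -/
import Mathlib

lemma single_mem_span_iff {α : Type*} (b : α) (C : Set α) :
    Finsupp.single b (1 : ℂ) ∈
      Submodule.span ℂ ((fun c => Finsupp.single c (1 : ℂ)) '' C) ↔ b ∈ C := by
  classical
  constructor
  · intro hmem
    by_contra hb
    have hle : Submodule.span ℂ ((fun c => Finsupp.single c (1 : ℂ)) '' C) ≤
        LinearMap.ker (Finsupp.lapply (M := ℂ) (R := ℂ) b) := by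
      rw [Submodule.span_le]
      rintro _ ⟨c, hc, rfl⟩
      simp only [SetLike.mem_coe, LinearMap.mem_ker, Finsupp.lapply_apply,
        Finsupp.single_apply]
      rw [if_neg]
      intro hcb
      exact hb (hcb ▸ hc)
    have := hle hmem
    simp [Finsupp.lapply_apply] at this
  · exact fun hb => Submodule.subset_span ⟨b, hb, rfl⟩

lemma span_single_eq_iff {α : Type*} (B C : Set α) :
    Submodule.span ℂ ((fun c => Finsupp.single c (1 : ℂ)) '' B) =
      Submodule.span ℂ ((fun c => Finsupp.single c (1 : ℂ)) '' C) ↔ B = C := by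
  constructor
  · intro hspan
    ext b
    constructor
    · intro hbB
      rw [← single_mem_span_iff b C, ← hspan, single_mem_span_iff]
      exact hbB
    · intro hbC
      rw [← single_mem_span_iff b B, hspan, single_mem_span_iff]
      exact hbC
  · intro hbc; rw [hbc]

/-- δ(I) = I iff -d ∈ S and Exp I ∩ V_mon(f) = Exp I \ (Exp I - d). -/
theorem delta_fixed_iff (d m : ℕ) (h : Fin m → ((Fin d → ℤ) →ₗ[ℤ] ℤ))
    (S : Set (Fin d → ℤ)) (hS : ∀ a, a ∈ S ↔ ∀ i, 0 ≤ h i a)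
    (hconv : ∀ a ∈ S, -a ∈ S → a = 0)
    (E : Set (Fin d → ℤ)) (hES : E ⊆ S)
    (hclosed : ∀ a ∈ E, ∀ s ∈ S, a + s ∈ E)
    (hNe : E.Nonempty) (hproper : E ≠ S)
    (dv : Fin d → ℤ) (f : MvPolynomial (Fin d) ℂ) :
    Submodule.span ℂ ((fun a => Finsupp.single (a + dv)
          (MvPolynomial.eval (fun i => ((a i : ℤ) : ℂ)) f) :
        (Fin d → ℤ) → ((Fin d → ℤ) →₀ ℂ)) '' E) =
      Submodule.span ℂ ((fun a => Finsupp.single a (1 : ℂ) :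
        (Fin d → ℤ) → ((Fin d → ℤ) →₀ ℂ)) '' E) ↔
      (-dv ∈ S ∧
        E ∩ {a | MvPolynomial.eval (fun i => ((a i : ℤ) : ℂ)) f = 0} =
          E \ {a | a + dv ∈ E}) := by
  classical
  set F : (Fin d → ℤ) → ℂ := fun a => MvPolynomial.eval (fun i => ((a i : ℤ) : ℂ)) f with hF
  set B : Set (Fin d → ℤ) := (fun a => a + dv) '' {a ∈ E | F a ≠ 0} with hB
  -- Step 1: LHS span equals span of singles over B
  have hspanB : Submodule.span ℂ ((fun a => Finsupp.single (a + dv) (F a) :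
        (Fin d → ℤ) → ((Fin d → ℤ) →₀ ℂ)) '' E) =
      Submodule.span ℂ ((fun c => Finsupp.single c (1 : ℂ)) '' B) := by
    apply le_antisymm
    · rw [Submodule.span_le]
      rintro _ ⟨a, ha, rfl⟩
      by_cases hfa : F a = 0
      · simp [hfa]
      · have heq : Finsupp.single (a + dv) (F a) =
            F a • Finsupp.single (a + dv) (1 : ℂ) := by
          rw [Finsupp.smul_single', mul_one]
        simp only [SetLike.mem_coe]
        show Finsupp.single (a + dv) (F a) ∈ _
        rw [heq]
        exact Submodule.smul_mem _ _
          (Submodule.subset_span ⟨a + dv, ⟨a, ⟨ha, hfa⟩, rfl⟩, rfl⟩)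
    · rw [Submodule.span_le]
      rintro _ ⟨_, ⟨a, ⟨ha, hfa⟩, rfl⟩, rfl⟩
      have heq : Finsupp.single (a + dv) (1 : ℂ) =
          (F a)⁻¹ • Finsupp.single (a + dv) (F a) := by
        rw [Finsupp.smul_single', inv_mul_cancel₀ hfa]
      simp only [SetLike.mem_coe]
      show Finsupp.single (a + dv) (1 : ℂ) ∈ _
      rw [heq]
      exact Submodule.smul_mem _ _ (Submodule.subset_span ⟨a, ha, rfl⟩)
  rw [hspanB, span_single_eq_iff]
  -- Step 2: B = E ↔ RHS
  constructor
  · intro hBE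
    have hstep : ∀ c ∈ E, c - dv ∈ E := by
      intro c hc
      rw [← hBE] at hc
      obtain ⟨a, ⟨haE, _⟩, rfl⟩ := hc
      simpa using haE
    constructor
    · -- -dv ∈ S
      rw [hS]
      intro i
      by_contra hneg
      push_neg at hneg
      have hpos : 0 < h i dv := by
        have := (h i).map_neg dv
        omega
      obtain ⟨b, hb⟩ := hNe
      have hiter : ∀ n : ℕ, b - n • dv ∈ E := by
        intro n
        induction n with
        | zero => simpa using hb
        | succ k ih =>
            have := hstep _ ih
            have heq : b - (k + 1) • dv = b - k • dv - dv := by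
              ext j; simp [sub_smul]; ring
            rw [heq]
            exact this
      set n : ℕ := (h i b).toNat + 1 with hn
      have hmem := (hS _).mp (hES (hiter n)) i
      have hmap : h i (b - n • dv) = h i b - n * h i dv := by
        rw [map_sub, map_nsmul]
        simp [nsmul_eq_mul]
      rw [hmap] at hmem
      have h1 : h i b < (n : ℤ) := by
        have := Int.self_le_toNat (h i b)
        omega
      have h2 : (n : ℤ) ≤ n * h i dv := by
        have : (1 : ℤ) ≤ h i dv := hpos
        nlinarith [Int.ofNat_nonneg n]
      omega
    · -- set equality
      ext a
      simp only [Set.mem_inter_iff, Set.mem_setOf_eq, Set.mem_diff]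
      constructor
      · rintro ⟨haE, hfa⟩
        refine ⟨haE, ?_⟩
        intro hadv
        rw [← hBE] at hadv
        obtain ⟨a', ⟨ha'E, hfa'⟩, heq⟩ := hadv
        have : a' = a := by
          funext j
          have := congrFun heq j
          simpa using this
        exact hfa' (this ▸ hfa)
      · rintro ⟨haE, hadv⟩
        refine ⟨haE, ?_⟩
        by_contra hfa
        exact hadv (hBE ▸ (⟨a, ⟨haE, hfa⟩, rfl⟩ : a + dv ∈ B))
  · rintro ⟨hdvS, hEq⟩
    ext b
    constructor
    · rintro ⟨a, ⟨haE, hfa⟩, rfl⟩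
      have : a ∉ E \ {a | a + dv ∈ E} := by
        rw [← hEq]
        rintro ⟨_, hfz⟩
        exact hfa hfz
      by_contra hbE
      exact this ⟨haE, hbE⟩
    · intro hbE
      have haE : b + -dv ∈ E := hclosed b hbE _ hdvS
      have hback : b + -dv + dv = b := neg_add_cancel_right b dv
      have hnfz : F (b + -dv) ≠ 0 := by
        intro hfz
        have : b + -dv ∈ E \ {a | a + dv ∈ E} := by
          rw [← hEq]; exact ⟨haE, hfz⟩
        exact this.2 (by rw [Set.mem_setOf_eq, hback]; exact hbE)
      exact ⟨b + -dv, ⟨haE, hnfz⟩, hback⟩
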